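/- Let l : ℝ → ℝ be non-decreasing on [0,∞) and concave on [0,∞). Let 0 ≤ y ≤ Y, v ≥ 0, and 0 ≤ x ≤ x' ≤ 1. Then x·( l(Y + v) − l(Y) ) ≤ l(y + x'·v) − l(y). -/

import Mathlib

/-- Key step in the budget feasibility proof of mechanism DA-con: for a concave
non-decreasing `l`, `0 ≤ y ≤ Y`, `v ≥ 0` and `0 ≤ x ≤ x' ≤ 1`,
`x·(l(Y+v) − l(Y)) ≤ l(y + x'·v) − l(y)`. -/
theorem stmt_15 (l : ℝ → ℝ)
    (hmono : MonotoneOn l (Set.Ici (0:ℝ)))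
    (hconc : ConcaveOn ℝ (Set.Ici (0:ℝ)) l)
    (y Y v x x' : ℝ) (hy : 0 ≤ y) (hyY : y ≤ Y) (hv : 0 ≤ v)
    (hx0 : 0 ≤ x) (hxx' : x ≤ x') (hx'1 : x' ≤ 1) :
    x * (l (Y + v) - l Y) ≤ l (y + x' * v) - l y := by
  have hY : (0:ℝ) ≤ Y := le_trans hy hyY
  have hYv : (0:ℝ) ≤ Y + v := by linarith
  have hyv : (0:ℝ) ≤ y + v := by linarith
  have hx'0 : (0:ℝ) ≤ x' := le_trans hx0 hxx'
  have hyxv : (0:ℝ) ≤ y + x' * v := by positivity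
  -- step 1 : l(Y+v) - l(Y) ≤ l(y+v) - l(y)
  have step1 : l (Y + v) - l Y ≤ l (y + v) - l y := by
    rcases eq_or_lt_of_le (show y ≤ Y + v by linarith) with hD | hD
    · have h1 : Y = y := le_antisymm (by linarith) hyY
      have h2 : v = 0 := by linarith
      simp [h1, h2]
    · set D := Y + v - y with hDdef
      have hDpos : 0 < D := by simp [hDdef]; linarith
      have ht0 : 0 ≤ (Y - y) / D := div_nonneg (by linarith) hDpos.le
      have hs0 : 0 ≤ v / D := div_nonneg hv hDpos.le
      have hts : (Y - y) / D + v / D = 1 := by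
        field_simp [hDdef]; ring
      have hA := hconc.2 (Set.mem_Ici.mpr hy) (Set.mem_Ici.mpr hYv)
        (by linarith : (0:ℝ) ≤ 1 - (Y - y) / D) ht0 (by linarith)
      have hB := hconc.2 (Set.mem_Ici.mpr hy) (Set.mem_Ici.mpr hYv)
        (by linarith : (0:ℝ) ≤ 1 - v / D) hs0 (by linarith)
      have heA : (1 - (Y - y) / D) • y + ((Y - y) / D) • (Y + v) = Y := by
        simp only [smul_eq_mul]
        linear_combination (Y - y) * mul_inv_cancel₀ hDpos.ne' - (Y - y) * D⁻¹ * hDdef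
      have heB : (1 - v / D) • y + (v / D) • (Y + v) = y + v := by
        simp only [smul_eq_mul]
        linear_combination v * mul_inv_cancel₀ hDpos.ne' - v * D⁻¹ * hDdef
      rw [heA] at hA
      rw [heB] at hB
      have hs : v / D = 1 - (Y - y) / D := by linarith
      rw [hs] at hB
      simp only [smul_eq_mul] at hA hB
      nlinarith [hA, hB]
  -- step 2 : x' * (l(y+v) - l(y)) ≤ l(y + x'*v) - l(y)
  have step2 : x' * (l (y + v) - l y) ≤ l (y + x' * v) - l y := by
    have h := hconc.2 (Set.mem_Ici.mpr hy) (Set.mem_Ici.mpr hyv)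
      (by linarith : (0:ℝ) ≤ 1 - x') hx'0 (by ring)
    have he : (1 - x') • y + x' • (y + v) = y + x' * v := by
      simp [smul_eq_mul]; ring
    rw [he] at h
    simp only [smul_eq_mul] at h
    nlinarith
  -- combine
  rcases le_or_gt (l (Y + v) - l Y) 0 with h0 | h0
  · have hl : l y ≤ l (y + x' * v) :=
      hmono (Set.mem_Ici.mpr hy) (Set.mem_Ici.mpr hyxv) (by nlinarith)
    nlinarith
  · have : x * (l (Y + v) - l Y) ≤ x' * (l (Y + v) - l Y) := by nlinarith
    have : x' * (l (Y + v) - l Y) ≤ x' * (l (y + v) - l y) := by nlinarith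
    nlinarith
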